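/- Let m ≥ 1 and let Z be an m×m matrix of positive integers whose diagonal entries all satisfy Z_{ii} ≥ 2. Then Z is the matrix of a category: there exists a category structure on the set of objects {1, …, m} with finite hom-sets such that for all i, j the number of arrows from i to j equals Z_{ij}. -/

import Mathlib

open CategoryTheory

theorem stmt17 (m : ℕ) (hm : 1 ≤ m) (Z : Matrix (Fin m) (Fin m) ℕ)
    (hpos : ∀ i j : Fin m, 1 ≤ Z i j)
    (hdiag : ∀ i : Fin m, 2 ≤ Z i i) :
    ∃ inst : Category.{0} (Fin m),
      ∀ i j : Fin m,
        Finite (@Quiver.Hom (Fin m) inst.toCategoryStruct.toQuiver i j) ∧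
        Nat.card (@Quiver.Hom (Fin m) inst.toCategoryStruct.toQuiver i j) = Z i j := by
  refine ⟨{
    Hom := fun i j => Fin (Z i j)
    id := fun i => ⟨1, hdiag i⟩
    comp := fun {i j k} f g =>
      if h : i = j ∧ f.val = 1 then ⟨g.val, by rw [h.1]; exact g.isLt⟩
      else if h' : j = k ∧ g.val = 1 then ⟨f.val, by rw [← h'.1]; exact f.isLt⟩
      else ⟨0, hpos i k⟩
    id_comp := by
      intro i j f
      dsimp only
      rw [dif_pos ⟨rfl, rfl⟩]
    comp_id := by
      intro i j f
      dsimp only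
      split_ifs with h h'
      · exact Fin.ext h.2.symm
      · rfl
      · exact absurd ⟨rfl, rfl⟩ h'
    assoc := by
      intro i j k l f g h
      try dsimp only
      apply Fin.ext
      simp only [apply_dite Fin.val, Fin.val_mk]
      split_ifs <;> simp_all <;> omega
  }, ?_⟩
  intro i j
  constructor
  · exact inferInstanceAs (Finite (Fin (Z i j)))
  · exact Nat.card_eq_of_equiv_fin (Equiv.refl _)
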